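/- Let A be a 2n × 2n real matrix such that every entry of A differs from the corresponding entry of the 2n × 2n identity matrix by less than 1/(2√n). Then rank(A) > n. -/

import Mathlib

open Matrix Finset

/-- If every entry of a `2n × 2n` real matrix `A` differs from the corresponding entry
of the identity matrix by less than `1/(2√n)`, then `rank(A) > n`. -/
theorem stmt_19 (n : ℕ) (hn : 1 ≤ n) (A : Matrix (Fin (2 * n)) (Fin (2 * n)) ℝ)
    (hA : ∀ i j, |A i j - (1 : Matrix (Fin (2 * n)) (Fin (2 * n)) ℝ) i j| <
      1 / (2 * Real.sqrt n)) :
    n < A.rank := by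
  by_contra hle
  push_neg at hle
  haveI : NeZero (2 * n) := ⟨by omega⟩
  -- the kernel has dimension at least n
  set K : Submodule ℝ (EuclideanSpace ℝ (Fin (2 * n))) := LinearMap.ker (Matrix.toEuclideanLin A) with hKdef
  have hrn : A.rank + Module.finrank ℝ K = 2 * n := by
    have h := LinearMap.finrank_range_add_finrank_ker (Matrix.toEuclideanLin A)
    rw [finrank_euclideanSpace_fin] at h
    rw [Matrix.rank_eq_finrank_range_toLin A (PiLp.basisFun 2 ℝ _) (PiLp.basisFun 2 ℝ _)]
    exact h
  have hker : n ≤ Module.finrank ℝ K := by omega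
  -- n orthonormal vectors in the kernel
  set b := stdOrthonormalBasis ℝ K with hb
  set u : Fin n → Fin (2 * n) → ℝ := fun i => WithLp.ofLp (b (Fin.castLE hker i) : EuclideanSpace ℝ (Fin (2 * n))) with hu
  have hon : ∀ i j : Fin n, (∑ a, u i a * u j a) = if i = j then (1 : ℝ) else 0 := by
    intro i j
    have h := (orthonormal_iff_ite.mp b.orthonormal) (Fin.castLE hker i) (Fin.castLE hker j)
    rw [Submodule.coe_inner] at h
    simp only [PiLp.inner_apply, RCLike.inner_apply, conj_trivial,
      Fin.castLE_inj] at h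
    simp only [hu]
    rw [← h]
    exact Finset.sum_congr rfl fun _ _ => mul_comm _ _
  have hK0 : ∀ i : Fin n, A.mulVec (u i) = 0 := by
    intro i
    have h := LinearMap.mem_ker.mp (b (Fin.castLE hker i)).2
    rw [Matrix.toEuclideanLin_apply] at h
    simpa [hu] using congrArg WithLp.ofLp h
  -- set up the Frobenius computation
  set E : Fin (2 * n) → Fin (2 * n) → ℝ := fun a c =>
    A a c - (1 : Matrix (Fin (2 * n)) (Fin (2 * n)) ℝ) a c with hE
  set P : Fin (2 * n) → Fin (2 * n) → ℝ := fun a c => ∑ i, u i a * u i c with hP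
  -- ∑ A * P = 0 since the u's are in the kernel
  have hAP : ∑ p : Fin (2 * n) × Fin (2 * n), A p.1 p.2 * P p.1 p.2 = 0 := by
    have key : ∑ p : Fin (2 * n) × Fin (2 * n), A p.1 p.2 * P p.1 p.2
        = ∑ i : Fin n, ∑ a, u i a * (A.mulVec (u i) a) := by
      calc ∑ p : Fin (2 * n) × Fin (2 * n), A p.1 p.2 * P p.1 p.2
          = ∑ p : Fin (2 * n) × Fin (2 * n), ∑ i : Fin n, A p.1 p.2 * (u i p.1 * u i p.2) := by
            simp only [hP, Finset.mul_sum]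
        _ = ∑ i : Fin n, ∑ p : Fin (2 * n) × Fin (2 * n), A p.1 p.2 * (u i p.1 * u i p.2) :=
            Finset.sum_comm
        _ = ∑ i : Fin n, ∑ a, u i a * (A.mulVec (u i) a) := by
            refine Finset.sum_congr rfl fun i _ => ?_
            rw [Fintype.sum_prod_type]
            refine Finset.sum_congr rfl fun a _ => ?_
            rw [Matrix.mulVec, dotProduct, Finset.mul_sum]
            exact Finset.sum_congr rfl fun c _ => by ring
    rw [key]
    simp [hK0]
  -- ∑ I * P = n  by orthonormality
  have hIP : ∑ p : Fin (2 * n) × Fin (2 * n),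
      (1 : Matrix (Fin (2 * n)) (Fin (2 * n)) ℝ) p.1 p.2 * P p.1 p.2 = (n : ℝ) := by
    rw [Fintype.sum_prod_type' (f := fun a c => (1 : Matrix (Fin (2 * n)) (Fin (2 * n)) ℝ) a c * P a c)]
    have : ∀ a : Fin (2 * n), ∑ c, (1 : Matrix (Fin (2 * n)) (Fin (2 * n)) ℝ) a c * P a c
        = P a a := by
      intro a
      simp [Matrix.one_apply, ite_mul]
    refine (Finset.sum_congr rfl fun a _ => this a).trans ?_
    simp only [hP]
    rw [Finset.sum_comm]
    have : ∀ i : Fin n, ∑ a, u i a * u i a = 1 := fun i => by simpa using hon i i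
    simp [this]
  have hS : ∑ p : Fin (2 * n) × Fin (2 * n), E p.1 p.2 * P p.1 p.2 = -(n : ℝ) := by
    simp only [hE, sub_mul, Finset.sum_sub_distrib, hAP, hIP, zero_sub]
  -- ∑ P² = n by orthonormality
  have hP2 : ∑ p : Fin (2 * n) × Fin (2 * n), P p.1 p.2 ^ 2 = (n : ℝ) := by
    calc ∑ p : Fin (2 * n) × Fin (2 * n), P p.1 p.2 ^ 2
        = ∑ p : Fin (2 * n) × Fin (2 * n), ∑ q : Fin n × Fin n,
            (u q.1 p.1 * u q.2 p.1) * (u q.1 p.2 * u q.2 p.2) := by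
          refine Finset.sum_congr rfl fun p _ => ?_
          rw [sq, hP, Finset.sum_mul_sum, Fintype.sum_prod_type]
          exact Finset.sum_congr rfl fun i _ => Finset.sum_congr rfl fun j _ => by ring
      _ = ∑ q : Fin n × Fin n, (∑ a, u q.1 a * u q.2 a) * (∑ c, u q.1 c * u q.2 c) := by
          rw [Finset.sum_comm]
          refine Finset.sum_congr rfl fun q _ => ?_
          rw [Fintype.sum_prod_type, Finset.sum_mul_sum]
      _ = ∑ q : Fin n × Fin n, if q.1 = q.2 then (1 : ℝ) else 0 := by
          refine Finset.sum_congr rfl fun q _ => ?_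
          rw [hon q.1 q.2]
          by_cases h : q.1 = q.2 <;> simp [h]
      _ = (n : ℝ) := by
          rw [Fintype.sum_prod_type]
          simp
  -- ∑ E² < n  by the entrywise bound
  have hE2 : ∑ p : Fin (2 * n) × Fin (2 * n), E p.1 p.2 ^ 2 < (n : ℝ) := by
    have hn' : (0 : ℝ) < n := by exact_mod_cast hn
    have hsqrt : Real.sqrt n ^ 2 = n := Real.sq_sqrt (le_of_lt hn')
    have hsq : ∀ a c, E a c ^ 2 < 1 / (4 * n) := by
      intro a c
      have h := hA a c
      have h2 : E a c ^ 2 < (1 / (2 * Real.sqrt n)) ^ 2 := by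
        rw [← sq_abs]
        exact pow_lt_pow_left₀ h (abs_nonneg _) two_ne_zero
      calc E a c ^ 2 < (1 / (2 * Real.sqrt n)) ^ 2 := h2
        _ = 1 / (4 * n) := by
            rw [div_pow, mul_pow, hsqrt]
            norm_num
    calc ∑ p : Fin (2 * n) × Fin (2 * n), E p.1 p.2 ^ 2
        < ∑ _p : Fin (2 * n) × Fin (2 * n), 1 / (4 * (n : ℝ)) :=
          Finset.sum_lt_sum_of_nonempty Finset.univ_nonempty (fun p _ => hsq p.1 p.2)
      _ = (n : ℝ) := by
          rw [Finset.sum_const, Finset.card_univ]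
          simp only [Fintype.card_prod, Fintype.card_fin, nsmul_eq_mul]
          push_cast
          field_simp
          ring
  -- Cauchy–Schwarz
  have hCS := Finset.sum_mul_sq_le_sq_mul_sq Finset.univ
    (fun p : Fin (2 * n) × Fin (2 * n) => E p.1 p.2)
    (fun p : Fin (2 * n) × Fin (2 * n) => P p.1 p.2)
  rw [hS, hP2] at hCS
  have hn' : (0 : ℝ) < n := by exact_mod_cast hn
  nlinarith [hCS, hE2, hn']
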